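/- arXiv:2107.10184 — 2 statements merged into one kernel-verified Lean document; each statement's English description precedes it below -/
import Mathlib

section
/- Let F be a field of characteristic zero and \kappa a nonzero scalar. If G(u,h) = \sum_{k\ge 0} G_k(u) h^k is an element of F((u))[[h]] satisfying G(u,h) G(u + \kappa h, h) = 1, where G(u + \kappa h, h) is defined via the formal Taylor expansion \sum_{l\ge 0} (\sum_{m=0}^{l} \kappa^m/m! \, d^m G_{l-m}/du^m) h^l, then G(u,h) = 1 or G(u,h) = -1; in particular, if additionally G(u,0) = 1 then G(u,h) = 1. -/
noncomputable section

variable {F : Type*} [Field F]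

/-- Formal derivative of a power series. -/
def psDeriv (f : PowerSeries F) : PowerSeries F :=
  PowerSeries.mk fun n => ((n : F) + 1) * PowerSeries.coeff (R := F) (n + 1) f

/-- Formal derivative of a Laurent series: writing `f = u^d · g(u)` with
`d = f.order` and `g` its power series part, `f' = d u^{d-1} g + u^d g'`. -/
def lsDeriv (f : LaurentSeries F) : LaurentSeries F :=
  HahnSeries.single (f.order - 1) ((f.order : ℤ) : F) *
      HahnSeries.ofPowerSeries ℤ F f.powerSeriesPart
    + HahnSeries.single f.order (1 : F) *
      HahnSeries.ofPowerSeries ℤ F (psDeriv f.powerSeriesPart)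

/-- The formal Taylor shift `G(u,h) ↦ G(u + κh, h)` on `F((u))[[h]]`:
the coefficient of `h^k` of the shift is `∑_{m=0}^{k} κ^m/m! · (d/du)^m G_{k-m}(u)`. -/
def taylorShift (κ : F) (G : PowerSeries (LaurentSeries F)) : PowerSeries (LaurentSeries F) :=
  PowerSeries.mk fun k => ∑ m ∈ Finset.range (k + 1),
    (κ ^ m / (m.factorial : F)) • lsDeriv^[m] (PowerSeries.coeff (R := LaurentSeries F) (k - m) G)


lemma lsDeriv_zero : lsDeriv (0 : LaurentSeries F) = 0 := by
  have h : psDeriv (0 : PowerSeries F) = 0 := by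
    ext n; simp [psDeriv]
  simp [lsDeriv, LaurentSeries.powerSeriesPart_zero, h]

lemma lsDeriv_single_zero (c : F) : lsDeriv (HahnSeries.single (0:ℤ) c) = 0 := by
  by_cases hc : c = 0
  · subst hc; simpa using lsDeriv_zero
  · have ho : (HahnSeries.single (0:ℤ) c).order = 0 := HahnSeries.order_single hc
    have hps : psDeriv (LaurentSeries.powerSeriesPart (HahnSeries.single (0:ℤ) c)) = 0 := by
      ext n
      simp only [psDeriv, PowerSeries.coeff_mk, LaurentSeries.powerSeriesPart_coeff, ho,
        zero_add, PowerSeries.coeff_zero_eq_constantCoeff, map_zero, mul_eq_zero]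
      exact Or.inr (HahnSeries.coeff_single_of_ne (by omega))
    simp [lsDeriv, ho, hps]

lemma coeff_taylorShift_zero (κ : F) (G : PowerSeries (LaurentSeries F)) :
    PowerSeries.coeff (R := LaurentSeries F) 0 (taylorShift κ G) =
      PowerSeries.coeff (R := LaurentSeries F) 0 G := by
  simp [taylorShift]

lemma ls_add_self_eq_zero [CharZero F] {a : LaurentSeries F} (h : a + a = 0) : a = 0 := by
  apply HahnSeries.coeff_injective
  funext n
  have := congrArg (fun x => HahnSeries.coeff x n) h
  simpa using add_self_eq_zero.mp (by simpa using this)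

lemma ls_one_ne_neg_one [CharZero F] : (1 : LaurentSeries F) ≠ -1 := by
  intro h
  have := congrArg (fun x => HahnSeries.coeff x (0:ℤ)) h
  simp [HahnSeries.coeff_one] at this
  exact (by norm_num : (1:F) ≠ -1) this

lemma ls_neg_one_eq : (-1 : LaurentSeries F) = HahnSeries.single (0:ℤ) (-1 : F) := by
  rw [← HahnSeries.single_zero_one]
  apply HahnSeries.coeff_injective
  funext n
  simp only [HahnSeries.coeff_neg', Pi.neg_apply, HahnSeries.coeff_single]
  split <;> simp

/-- over a field `F` of characteristic zero, if
`G(u,h) ∈ F((u))[[h]]` satisfies `G(u,h) · G(u+κh,h) = 1` (with `κ ≠ 0` and the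
shift interpreted via formal Taylor expansion), then `G = 1` or `G = -1`;
in particular if moreover `G(u,0) = 1` then `G = 1`. -/
theorem stmt1 [CharZero F] (κ : F) (hκ : κ ≠ 0) (G : PowerSeries (LaurentSeries F))
    (hG : G * taylorShift κ G = 1) :
    (G = 1 ∨ G = -1) ∧ (PowerSeries.coeff (R := LaurentSeries F) 0 G = 1 → G = 1) := by
  set C0 := PowerSeries.coeff (R := LaurentSeries F) 0 G with hC0
  have hsq : C0 * C0 = 1 := by
    have h := congrArg (PowerSeries.constantCoeff (R := LaurentSeries F)) hG
    rw [map_mul, map_one, ← PowerSeries.coeff_zero_eq_constantCoeff_apply,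
      ← PowerSeries.coeff_zero_eq_constantCoeff_apply, coeff_taylorShift_zero] at h
    exact h
  have hC0ne : C0 ≠ 0 := fun h => by simp [h] at hsq
  have hε : C0 = 1 ∨ C0 = -1 := mul_self_eq_one_iff.mp hsq
  have hderiv : lsDeriv C0 = 0 := by
    rcases hε with h | h <;> rw [h]
    · rw [← HahnSeries.single_zero_one]; exact lsDeriv_single_zero 1
    · rw [ls_neg_one_eq]; exact lsDeriv_single_zero (-1)
  have key : ∀ k, 0 < k → PowerSeries.coeff (R := LaurentSeries F) k G = 0 := by
    intro k
    induction k using Nat.strong_induction_on with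
    | _ k ih =>
      intro hk
      have h := congrArg (PowerSeries.coeff (R := LaurentSeries F) k) hG
      rw [PowerSeries.coeff_one, if_neg hk.ne', PowerSeries.coeff_mul,
        Finset.Nat.sum_antidiagonal_eq_sum_range_succ_mk, Finset.sum_range_succ] at h
      have hTSk : PowerSeries.coeff (R := LaurentSeries F) k (taylorShift κ G) =
          PowerSeries.coeff (R := LaurentSeries F) k G := by
        rw [taylorShift, PowerSeries.coeff_mk]
        rw [Finset.sum_eq_single 0]
        · simp
        · intro m hm hm0
          rcases Nat.lt_or_ge m k with hmk | hmk
          · have : PowerSeries.coeff (R := LaurentSeries F) (k - m) G = 0 :=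
              ih (k - m) (by omega) (by omega)
            rw [this, Function.iterate_fixed lsDeriv_zero, smul_zero]
          · have hmk' : m = k := by
              have : m < k + 1 := Finset.mem_range.mp hm
              omega
            subst hmk'
            have hk1 : m = (m - 1) + 1 := by omega
            rw [Nat.sub_self, ← hC0, hk1, Function.iterate_succ_apply, hderiv,
              Function.iterate_fixed lsDeriv_zero, smul_zero]
        · intro h0; exact absurd (Finset.mem_range.mpr (by omega)) h0
      have hlow : ∑ i ∈ Finset.range k,
          PowerSeries.coeff (R := LaurentSeries F) i G *
            PowerSeries.coeff (R := LaurentSeries F) (k - i) (taylorShift κ G)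
          = C0 * PowerSeries.coeff (R := LaurentSeries F) k G := by
        rw [Finset.sum_eq_single 0]
        · rw [Nat.sub_zero, hTSk, ← hC0]
        · intro i hi hi0
          rw [ih i (Finset.mem_range.mp hi) (by omega), zero_mul]
        · intro h0; exact absurd (Finset.mem_range.mpr hk) h0
      rw [hlow, Nat.sub_self, coeff_taylorShift_zero, ← hC0, mul_comm _ C0, ← mul_add] at h
      have := (mul_eq_zero.mp h).resolve_left hC0ne
      exact ls_add_self_eq_zero this
  have hGC : G = PowerSeries.C (R := LaurentSeries F) C0 := by
    ext n
    rw [PowerSeries.coeff_C]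
    rcases Nat.eq_zero_or_pos n with h | h
    · simp [h, hC0]
    · rw [key n h, if_neg h.ne']
  have main : G = 1 ∨ G = -1 := by
    rcases hε with h | h
    · left; rw [hGC, h, map_one]
    · right; rw [hGC, h, map_neg, map_one]
  refine ⟨main, fun h1 => ?_⟩
  rcases hε with h | h
  · rw [hGC, h, map_one]
  · exact absurd (h1 ▸ h) ls_one_ne_neg_one

end
end

section
/- Let \widehat{R}(u) be an R-matrix with values in End C^N \otimes End C^N ((u))[[h]] satisfying the Yang-Baxter equation \widehat{R}_{12}(u)\widehat{R}_{13}(u+v)\widehat{R}_{23}(v) = \widehat{R}_{23}(v)\widehat{R}_{13}(u+v)\widehat{R}_{12}(u). Suppose T^-(u) is an operator-valued series satisfying, for all k \ge 1, T^-_{k+1}(u) T^+_1(v_1) \cdots T^+_k(v_k) = \widehat{R}_{1,k+1}(-u+v_1-hc/2) \cdots \widehat{R}_{k,k+1}(-u+v_k-hc/2) T^+_1(v_1) \cdots T^+_k(v_k) \widehat{R}_{k,k+1}(-u+v_k+hc/2)^{-1} \cdots \widehat{R}_{1,k+1}(-u+v_1+hc/2)^{-1}. Then T^-(u) satisfies the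 RTT relation \widehat{R}(u_1-u_2) T^-_1(u_1) T^-_2(u_2) = T^-_2(u_2) T^-_1(u_1) \widehat{R}(u_1-u_2) as operators on the span of all T^+_1(v_1)\cdots T^+_k(v_k) applied to the vacuum. -/
set_option synthInstance.maxHeartbeats 1000000
set_option maxHeartbeats 1000000

noncomputable section

variable {S : Type*} [CommRing S]

/-- Two-leg scalar matrices: operators on `ℂ^N ⊗ ℂ^N` with entries in `S`. -/
abbrev Mat2 (N : ℕ) (S : Type*) := Matrix (Fin N × Fin N) (Fin N × Fin N) S

/-- Operators on `(ℂ^N)^{⊗ m}` with entries in a ring `A`. -/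
abbrev BigMat (N m : ℕ) (A : Type*) := Matrix (Fin m → Fin N) (Fin m → Fin N) A

/-- Embedding of a two-leg scalar matrix into the legs `a`, `b` of
`(ℂ^N)^{⊗ m}`, with scalars acting through the `S`-algebra `A`. -/
def leg2 {N m : ℕ} (A : Type*) [Ring A] [Algebra S A] (a b : Fin m) (M : Mat2 N S) :
    BigMat N m A :=
  fun f g =>
    if ∀ c, c ≠ a → c ≠ b → f c = g c then algebraMap S A (M (f a, f b) (g a, g b)) else 0

/-- Embedding of a one-leg `A`-valued matrix into the leg `a` of `(ℂ^N)^{⊗ m}`. -/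
def leg1 {N m : ℕ} {A : Type*} [Ring A] (a : Fin m) (T : Matrix (Fin N) (Fin N) A) :
    BigMat N m A :=
  fun f g => if ∀ c, c ≠ a → f c = g c then T (f a) (g a) else 0

/-- The ascending ordered product `f 0 * f 1 * ⋯ * f (k-1)`. -/
def ascProd {M : Type*} [Monoid M] {k : ℕ} (f : Fin k → M) : M :=
  (List.ofFn f).prod

/-- The descending ordered product `f (k-1) * ⋯ * f 1 * f 0`. -/
def descProd {M : Type*} [Monoid M] {k : ℕ} (f : Fin k → M) : M :=
  ((List.ofFn f).reverse).prod

/-- Entrywise application of an operator-valued matrix to a vector. -/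
def applyV {N m : ℕ} {W : Type*} [AddCommGroup W] [Module S W]
    (M : BigMat N m (Module.End S W)) (w : W) :
    Matrix (Fin m → Fin N) (Fin m → Fin N) W :=
  fun f g => (M f g) w

section Prods
variable {M : Type*} [Monoid M]

theorem ascProd_zero (f : Fin 0 → M) : ascProd f = 1 := by
  simp [ascProd]

theorem descProd_zero (f : Fin 0 → M) : descProd f = 1 := by
  simp [descProd]

theorem ascProd_succ {k : ℕ} (f : Fin (k+1) → M) :
    ascProd f = f 0 * ascProd (fun i => f i.succ) := by
  simp [ascProd, List.ofFn_succ]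

theorem descProd_succ {k : ℕ} (f : Fin (k+1) → M) :
    descProd f = descProd (fun i => f i.succ) * f 0 := by
  simp [descProd, List.ofFn_succ]

theorem map_ascProd {M' : Type*} [Monoid M'] (φ : M → M') (h1 : φ 1 = 1)
    (hmul : ∀ x y, φ (x * y) = φ x * φ y) {k : ℕ} (f : Fin k → M) :
    φ (ascProd f) = ascProd (fun i => φ (f i)) := by
  induction k with
  | zero => simp [ascProd_zero, h1]
  | succ k ih => rw [ascProd_succ, hmul, ih, ascProd_succ]

theorem map_descProd {M' : Type*} [Monoid M'] (φ : M → M') (h1 : φ 1 = 1)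
    (hmul : ∀ x y, φ (x * y) = φ x * φ y) {k : ℕ} (f : Fin k → M) :
    φ (descProd f) = descProd (fun i => φ (f i)) := by
  induction k with
  | zero => simp [descProd_zero, h1]
  | succ k ih => rw [descProd_succ, hmul, ih, descProd_succ]

theorem commute_ascProd {k : ℕ} {c : M} {f : Fin k → M} (h : ∀ i, Commute c (f i)) :
    Commute c (ascProd f) := by
  apply Commute.list_prod_right
  intro x hx
  obtain ⟨i, rfl⟩ := List.mem_ofFn.mp hx
  exact h i

theorem commute_descProd {k : ℕ} {c : M} {f : Fin k → M} (h : ∀ i, Commute c (f i)) :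
    Commute c (descProd f) := by
  apply Commute.list_prod_right
  intro x hx
  obtain ⟨i, rfl⟩ := List.mem_ofFn.mp (List.mem_reverse.mp hx)
  exact h i

theorem ascProd_mul_ascProd {k : ℕ} {f g : Fin k → M}
    (h : ∀ i j, i < j → Commute (g i) (f j)) :
    ascProd f * ascProd g = ascProd (fun i => f i * g i) := by
  induction k with
  | zero => simp [ascProd_zero]
  | succ k ih =>
      rw [ascProd_succ f, ascProd_succ g, ascProd_succ (fun i => f i * g i)]
      have hc : Commute (g 0) (ascProd (fun i => f i.succ)) := by
        apply (commute_ascProd (fun i => ?_))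
        exact h 0 i.succ (Fin.succ_pos i)
      calc f 0 * ascProd (fun i => f i.succ) * (g 0 * ascProd (fun i => g i.succ))
          = f 0 * (ascProd (fun i => f i.succ) * g 0) * ascProd (fun i => g i.succ) := by
            rw [mul_assoc, mul_assoc, mul_assoc]
        _ = f 0 * g 0 * (ascProd (fun i => f i.succ) * ascProd (fun i => g i.succ)) := by
            rw [← hc.eq]; rw [mul_assoc, mul_assoc, mul_assoc]
        _ = f 0 * g 0 * ascProd (fun i => f i.succ * g i.succ) := by
            rw [ih (fun i j hij => h i.succ j.succ (Fin.succ_lt_succ_iff.mpr hij))]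

theorem descProd_mul_descProd {k : ℕ} {f g : Fin k → M}
    (h : ∀ i j, i < j → Commute (f i) (g j)) :
    descProd f * descProd g = descProd (fun i => f i * g i) := by
  induction k with
  | zero => simp [descProd_zero]
  | succ k ih =>
      rw [descProd_succ f, descProd_succ g, descProd_succ (fun i => f i * g i)]
      have hc : Commute (f 0) (descProd (fun i => g i.succ)) := by
        apply commute_descProd (fun i => ?_)
        exact h 0 i.succ (Fin.succ_pos i)
      calc descProd (fun i => f i.succ) * f 0 * (descProd (fun i => g i.succ) * g 0)
          = descProd (fun i => f i.succ) * (f 0 * descProd (fun i => g i.succ)) * g 0 := by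
            rw [mul_assoc, mul_assoc, mul_assoc]
        _ = descProd (fun i => f i.succ) * descProd (fun i => g i.succ) * (f 0 * g 0) := by
            rw [hc.eq]; rw [mul_assoc, mul_assoc, mul_assoc]
        _ = descProd (fun i => f i.succ * g i.succ) * (f 0 * g 0) := by
            rw [ih (fun i j hij => h i.succ j.succ (Fin.succ_lt_succ_iff.mpr hij))]

theorem conj_ascProd {k : ℕ} {Q : M} {f g : Fin k → M} (h : ∀ i, Q * f i = g i * Q) :
    Q * ascProd f = ascProd g * Q := by
  induction k with
  | zero => simp [ascProd_zero]
  | succ k ih =>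
      rw [ascProd_succ f, ascProd_succ g, ← mul_assoc, h 0, mul_assoc,
        ih (fun i => h i.succ), ← mul_assoc]

theorem conj_descProd {k : ℕ} {Q : M} {f g : Fin k → M} (h : ∀ i, Q * f i = g i * Q) :
    Q * descProd f = descProd g * Q := by
  induction k with
  | zero => simp [descProd_zero]
  | succ k ih =>
      rw [descProd_succ f, descProd_succ g, ← mul_assoc,
        ih (fun i => h i.succ), mul_assoc, h 0, ← mul_assoc]

end Prods

section Pull
variable {N m' m : ℕ} {A : Type*} [Ring A]

def pullMap (ι : Fin m' → Fin m) (M : BigMat N m' A) : BigMat N m A :=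
  fun f g => if ∀ c, (∀ a, ι a ≠ c) → f c = g c then M (f ∘ ι) (g ∘ ι) else 0

theorem pullMap_cond_iff {ι : Fin m' → Fin m} {f g : Fin m → Fin N}
    (h1 : ∀ c, (∀ a, ι a ≠ c) → f c = g c) (h2 : f ∘ ι = g ∘ ι) : f = g := by
  funext c
  by_cases hc2 : ∃ a, ι a = c
  · obtain ⟨a, rfl⟩ := hc2
    exact congrFun h2 a
  · exact h1 c (fun a ha => hc2 ⟨a, ha⟩)

theorem pullMap_one {ι : Fin m' → Fin m} (hι : Function.Injective ι) :
    pullMap (N := N) (A := A) ι 1 = 1 := by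
  ext f g
  by_cases hfg : f = g
  · subst hfg
    simp [pullMap, Matrix.one_apply]
  · rw [Matrix.one_apply_ne hfg, pullMap]
    split_ifs with h1
    · exact Matrix.one_apply_ne (fun h2 => hfg (pullMap_cond_iff h1 h2))
    · rfl

theorem pullMap_mul {ι : Fin m' → Fin m} (hι : Function.Injective ι)
    (M M' : BigMat N m' A) :
    pullMap ι (M * M') = pullMap ι M * pullMap ι M' := by
  ext f g
  simp only [Matrix.mul_apply, pullMap]
  by_cases hfg : ∀ c, (∀ a, ι a ≠ c) → f c = g c
  · rw [if_pos hfg]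
    symm
    rw [← Finset.sum_filter_of_ne
      (p := fun h : Fin m → Fin N => ∀ c, (∀ a, ι a ≠ c) → f c = h c)
      (by
        intro h _ hne
        by_contra hh
        apply hne
        rw [if_neg hh, zero_mul])]
    apply Finset.sum_nbij' (i := fun h => h ∘ ι) (j := fun h' => Function.extend ι h' f)
    · intro h _; exact Finset.mem_univ _
    · intro h' _
      simp only [Finset.mem_filter, Finset.mem_univ, true_and]
      intro c hc
      rw [Function.extend_apply' _ _ _ (fun ⟨a, ha⟩ => hc a ha)]
    · intro h hh
      simp only [Finset.mem_filter, Finset.mem_univ, true_and] at hh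
      funext c
      by_cases hc2 : ∃ a, ι a = c
      · obtain ⟨a, rfl⟩ := hc2
        exact (hι.extend_apply _ _ _)
      · rw [Function.extend_apply' _ _ _ hc2]
        exact hh c (fun a ha => hc2 ⟨a, ha⟩)
    · intro h' _
      funext a
      exact hι.extend_apply _ _ _
    · intro h hh
      simp only [Finset.mem_filter, Finset.mem_univ, true_and] at hh
      rw [if_pos hh, if_pos ?_]
      intro c hc
      rw [← hh c hc]
      exact hfg c hc
  · rw [if_neg hfg]
    symm
    apply Finset.sum_eq_zero
    intro h _
    by_cases h1 : ∀ c, (∀ a, ι a ≠ c) → f c = h c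
    · have h2 : ¬ ∀ c, (∀ a, ι a ≠ c) → h c = g c := by
        intro h2
        exact hfg (fun c hc => (h1 c hc).trans (h2 c hc))
      rw [if_neg h2, mul_zero]
    · rw [if_neg h1, zero_mul]

theorem pullMap_comp {m'' : ℕ} {ι : Fin m' → Fin m} (hι : Function.Injective ι)
    (κ : Fin m'' → Fin m') (M : BigMat N m'' A) :
    pullMap ι (pullMap κ M) = pullMap (ι ∘ κ) M := by
  ext f g
  simp only [pullMap]
  by_cases h1 : ∀ c, (∀ a, (ι ∘ κ) a ≠ c) → f c = g c
  · rw [if_pos h1]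
    have houter : ∀ c, (∀ a, ι a ≠ c) → f c = g c := by
      intro c hc
      exact h1 c (fun a ha => hc (κ a) ha)
    rw [if_pos houter, if_pos ?_]
    · rfl
    · intro c' hc'
      apply h1 (ι c')
      intro a ha
      exact hc' a (hι ha)
  · rw [if_neg h1]
    split_ifs with h2 h3
    · exfalso
      apply h1
      intro c hc
      by_cases hc2 : ∃ a, ι a = c
      · obtain ⟨a, rfl⟩ := hc2
        exact h3 a (fun a' ha' => hc a' (congrArg ι ha'))
      · exact h2 c (fun a ha => hc2 ⟨a, ha⟩)
    · rfl
    · rfl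

end Pull

section Emb
variable {N m : ℕ} {A : Type*} [Ring A] [Algebra S A]

/-- A `Mat2` as a matrix on two legs. -/
def emb2 (M : Mat2 N S) : BigMat N 2 A :=
  fun f g => algebraMap S A (M (f 0, f 1) (g 0, g 1))

def emb1 (T : Matrix (Fin N) (Fin N) A) : BigMat N 1 A :=
  fun f g => T (f 0) (g 0)

theorem fin2_funext_iff {f g : Fin 2 → Fin N} : f = g ↔ f 0 = g 0 ∧ f 1 = g 1 := by
  constructor
  · rintro rfl; exact ⟨rfl, rfl⟩
  · rintro ⟨h0, h1⟩
    funext c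
    match c with
    | 0 => exact h0
    | 1 => exact h1

theorem emb2_one : emb2 (S := S) (N := N) (A := A) 1 = 1 := by
  ext f g
  rw [emb2, Matrix.one_apply, Matrix.one_apply]
  by_cases h : (f 0, f 1) = (g 0, g 1)
  · rw [if_pos h, if_pos (fin2_funext_iff.mpr (Prod.ext_iff.mp h)), map_one]
  · rw [if_neg h, if_neg (fun h2 => h (by rw [h2])), map_zero]

theorem emb2_mul (M M' : Mat2 N S) :
    emb2 (S := S) (N := N) (A := A) (M * M') = emb2 M * emb2 M' := by
  ext f g
  rw [Matrix.mul_apply, emb2, Matrix.mul_apply, map_sum]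
  apply Finset.sum_nbij' (i := fun p : Fin N × Fin N => ![p.1, p.2])
    (j := fun h : Fin 2 → Fin N => (h 0, h 1))
  · intro p _; exact Finset.mem_univ _
  · intro h _; exact Finset.mem_univ _
  · intro p _; simp
  · intro h _
    funext c
    match c with
    | 0 => rfl
    | 1 => rfl
  · intro p _
    rw [map_mul, emb2, emb2]
    rfl

theorem leg2_eq_pullMap (a b : Fin m) (M : Mat2 N S) :
    leg2 (S := S) A a b M = pullMap ![a, b] (emb2 M) := by
  ext f g
  rw [leg2, pullMap, emb2]
  apply if_congr _ rfl rfl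
  constructor
  · intro h c hc
    exact h c (fun hc2 => hc 0 hc2.symm) (fun hc2 => hc 1 hc2.symm)
  · intro h c hca hcb
    apply h c
    intro i
    match i with
    | 0 => exact fun hi => hca hi.symm
    | 1 => exact fun hi => hcb hi.symm

theorem leg1_eq_pullMap (a : Fin m) (T : Matrix (Fin N) (Fin N) A) :
    leg1 a T = pullMap ![a] (emb1 T) := by
  ext f g
  rw [leg1, pullMap, emb1]
  apply if_congr _ rfl rfl
  constructor
  · intro h c hc
    exact h c (fun hc2 => hc 0 hc2.symm)
  · intro h c hca
    apply h c
    intro i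
    match i with
    | 0 => exact fun hi => hca hi.symm

end Emb

section LegLemmas
variable {N m m' : ℕ} {A : Type*} [Ring A] [Algebra S A]

theorem vec2_injective {a b : Fin m} (hab : a ≠ b) : Function.Injective ![a, b] := by
  intro i j hij
  match i, j with
  | 0, 0 => rfl
  | 1, 1 => rfl
  | 0, 1 => exact absurd hij hab
  | 1, 0 => exact absurd hij.symm hab

theorem vec1_injective {a : Fin m} : Function.Injective ![a] := by
  intro i j _
  match i, j with
  | 0, 0 => rfl

theorem pullMap_leg2 {ι : Fin m' → Fin m} (hι : Function.Injective ι)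
    (a b : Fin m') (M : Mat2 N S) :
    pullMap ι (leg2 (S := S) A a b M) = leg2 (S := S) A (ι a) (ι b) M := by
  have hv : ι ∘ ![a, b] = ![ι a, ι b] := by
    funext i
    match i with
    | 0 => rfl
    | 1 => rfl
  rw [leg2_eq_pullMap, pullMap_comp hι, hv, leg2_eq_pullMap]

theorem pullMap_leg1 {ι : Fin m' → Fin m} (hι : Function.Injective ι)
    (a : Fin m') (T : Matrix (Fin N) (Fin N) A) :
    pullMap ι (leg1 a T) = leg1 (ι a) T := by
  have hv : ι ∘ ![a] = ![ι a] := by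
    funext i
    match i with
    | 0 => rfl
  rw [leg1_eq_pullMap, pullMap_comp hι, hv, leg1_eq_pullMap]

theorem leg2_mul {a b : Fin m} (hab : a ≠ b) (M M' : Mat2 N S) :
    leg2 (S := S) A a b M * leg2 (S := S) A a b M' = leg2 (S := S) A a b (M * M') := by
  rw [leg2_eq_pullMap, leg2_eq_pullMap, leg2_eq_pullMap, ← pullMap_mul (vec2_injective hab),
    emb2_mul]

theorem leg2_one {a b : Fin m} (hab : a ≠ b) :
    leg2 (S := S) A a b (1 : Mat2 N S) = 1 := by
  rw [leg2_eq_pullMap, emb2_one, pullMap_one (vec2_injective hab)]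

theorem leg2_map {a b : Fin m} (M : Mat2 N S) :
    (leg2 (S := S) S a b M).map (algebraMap S A) = leg2 (S := S) A a b M := by
  ext f g
  rw [Matrix.map_apply, leg2, leg2, apply_ite (algebraMap S A), map_zero]
  simp

end LegLemmas

section Comm
variable {N m : ℕ} {A : Type*} [Ring A] [Algebra S A]

theorem leg2_comm {a b : Fin m} (hab : a ≠ b) (M : Mat2 N S) (K : BigMat N m A)
    (hK0 : ∀ f g : Fin m → Fin N, f a ≠ g a ∨ f b ≠ g b → K f g = 0)
    (hKinv : ∀ f g : Fin m → Fin N,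
      K (Function.update (Function.update f a (g a)) b (g b)) g
        = K f (Function.update (Function.update g a (f a)) b (f b))) :
    leg2 (S := S) A a b M * K = K * leg2 (S := S) A a b M := by
  ext f g
  rw [Matrix.mul_apply, Matrix.mul_apply]
  set h₀ := Function.update (Function.update f a (g a)) b (g b) with hh₀
  set g₀ := Function.update (Function.update g a (f a)) b (f b) with hg₀
  have hh₀a : h₀ a = g a := by rw [hh₀, Function.update_of_ne hab, Function.update_self]
  have hh₀b : h₀ b = g b := by rw [hh₀, Function.update_self]
  have hh₀c : ∀ c, c ≠ a → c ≠ b → h₀ c = f c := by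
    intro c hca hcb
    rw [hh₀, Function.update_of_ne hcb, Function.update_of_ne hca]
  have hg₀a : g₀ a = f a := by rw [hg₀, Function.update_of_ne hab, Function.update_self]
  have hg₀b : g₀ b = f b := by rw [hg₀, Function.update_self]
  have hg₀c : ∀ c, c ≠ a → c ≠ b → g₀ c = g c := by
    intro c hca hcb
    rw [hg₀, Function.update_of_ne hcb, Function.update_of_ne hca]
  rw [Finset.sum_eq_single_of_mem h₀ (Finset.mem_univ _) ?_,
    Finset.sum_eq_single_of_mem g₀ (Finset.mem_univ _) ?_]
  · have e1 : leg2 (S := S) A a b M f h₀ = algebraMap S A (M (f a, f b) (g a, g b)) := by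
      rw [leg2, if_pos (fun c hca hcb => (hh₀c c hca hcb).symm), hh₀a, hh₀b]
    have e2 : leg2 (S := S) A a b M g₀ g = algebraMap S A (M (f a, f b) (g a, g b)) := by
      rw [leg2, if_pos hg₀c, hg₀a, hg₀b]
    rw [e1, e2, Algebra.commutes, hKinv f g]
  · -- other terms in the second sum vanish
    intro h _ hne
    by_cases h1 : ∀ c, c ≠ a → c ≠ b → h c = g c
    · by_cases h2 : f a = h a ∧ f b = h b
      · exfalso
        apply hne
        funext c
        by_cases hca : c = a
        · subst hca; rw [hg₀a, ← h2.1]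
        · by_cases hcb : c = b
          · subst hcb; rw [hg₀b, ← h2.2]
          · rw [hg₀c c hca hcb, h1 c hca hcb]
      · rw [hK0 f h ?_, zero_mul]
        rcases not_and_or.mp h2 with h3 | h3
        · exact Or.inl h3
        · exact Or.inr h3
    · rw [leg2, if_neg h1, mul_zero]
  · intro h _ hne
    by_cases h1 : ∀ c, c ≠ a → c ≠ b → f c = h c
    · by_cases h2 : h a = g a ∧ h b = g b
      · exfalso
        apply hne
        funext c
        by_cases hca : c = a
        · subst hca; rw [hh₀a, h2.1]
        · by_cases hcb : c = b
          · subst hcb; rw [hh₀b, h2.2]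
          · rw [hh₀c c hca hcb, h1 c hca hcb]
      · rw [hK0 h g ?_, mul_zero]
        rcases not_and_or.mp h2 with h3 | h3
        · exact Or.inl h3
        · exact Or.inr h3
    · rw [leg2, if_neg h1, zero_mul]

theorem leg2_comm_leg1 {a b d : Fin m} (hab : a ≠ b) (hda : d ≠ a) (hdb : d ≠ b)
    (M : Mat2 N S) (T : Matrix (Fin N) (Fin N) A) :
    leg2 (S := S) A a b M * leg1 d T = leg1 d T * leg2 (S := S) A a b M := by
  apply leg2_comm hab
  · intro f g hne
    rw [leg1]
    apply if_neg
    intro hcond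
    rcases hne with h | h
    · exact h (hcond a hda.symm)
    · exact h (hcond b hdb.symm)
  · intro f g
    rw [leg1, leg1, Function.update_of_ne hdb, Function.update_of_ne hda,
      Function.update_of_ne hdb, Function.update_of_ne hda]
    apply if_congr _ rfl rfl
    constructor
    · intro h c hcd
      by_cases hca : c = a
      · subst hca
        rw [Function.update_of_ne hab, Function.update_self]
      · by_cases hcb : c = b
        · subst hcb
          rw [Function.update_self]
        · rw [Function.update_of_ne hcb, Function.update_of_ne hca]
          rw [← h c hcd, Function.update_of_ne hcb, Function.update_of_ne hca]
    · intro h c hcd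
      by_cases hca : c = a
      · subst hca
        rw [Function.update_of_ne hab, Function.update_self]
      · by_cases hcb : c = b
        · subst hcb
          rw [Function.update_self]
        · rw [Function.update_of_ne hcb, Function.update_of_ne hca]
          rw [h c hcd, Function.update_of_ne hcb, Function.update_of_ne hca]

theorem leg2_comm_leg2 {a b a' b' : Fin m} (hab : a ≠ b)
    (h1 : a' ≠ a) (h2 : a' ≠ b) (h3 : b' ≠ a) (h4 : b' ≠ b)
    (M M' : Mat2 N S) :
    leg2 (S := S) A a b M * leg2 (S := S) A a' b' M'
      = leg2 (S := S) A a' b' M' * leg2 (S := S) A a b M := by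
  apply leg2_comm hab
  · intro f g hne
    rw [leg2]
    apply if_neg
    intro hcond
    rcases hne with h | h
    · exact h (hcond a h1.symm h3.symm)
    · exact h (hcond b h2.symm h4.symm)
  · intro f g
    rw [leg2, leg2, Function.update_of_ne h4, Function.update_of_ne h2,
      Function.update_of_ne h3, Function.update_of_ne h1,
      Function.update_of_ne h4, Function.update_of_ne h2,
      Function.update_of_ne h3, Function.update_of_ne h1]
    apply if_congr _ rfl rfl
    constructor
    · intro h c hca' hcb'
      by_cases hca : c = a
      · subst hca
        rw [Function.update_of_ne hab, Function.update_self]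
      · by_cases hcb : c = b
        · subst hcb
          rw [Function.update_self]
        · rw [Function.update_of_ne hcb, Function.update_of_ne hca]
          rw [← h c hca' hcb', Function.update_of_ne hcb, Function.update_of_ne hca]
    · intro h c hca' hcb'
      by_cases hca : c = a
      · subst hca
        rw [Function.update_of_ne hab, Function.update_self]
      · by_cases hcb : c = b
        · subst hcb
          rw [Function.update_self]
        · rw [Function.update_of_ne hcb, Function.update_of_ne hca]
          rw [h c hca' hcb', Function.update_of_ne hcb, Function.update_of_ne hca]

end Comm

section ApplyV
variable {N m : ℕ} {W : Type*} [AddCommGroup W] [Module S W]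

theorem applyV_pullMap_congr {m' : ℕ} (ι : Fin m' → Fin m)
    {M M' : BigMat N m' (Module.End S W)} {vac : W}
    (h : applyV (S := S) M vac = applyV (S := S) M' vac) :
    applyV (S := S) (pullMap ι M) vac = applyV (S := S) (pullMap ι M') vac := by
  ext f g
  show (pullMap ι M f g) vac = (pullMap ι M' f g) vac
  rw [pullMap, pullMap]
  by_cases hc : ∀ c, (∀ a, ι a ≠ c) → f c = g c
  · rw [if_pos hc, if_pos hc]
    exact congrFun (congrFun h (f ∘ ι)) (g ∘ ι)
  · rw [if_neg hc, if_neg hc]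

theorem applyV_CXd {X Y : BigMat N m (Module.End S W)} {vac : W}
    (h : applyV (S := S) X vac = applyV (S := S) Y vac)
    (C : BigMat N m (Module.End S W)) (d : BigMat N m S) :
    applyV (S := S) (C * X * d.map (algebraMap S (Module.End S W))) vac
      = applyV (S := S) (C * Y * d.map (algebraMap S (Module.End S W))) vac := by
  have key : ∀ (Z : BigMat N m (Module.End S W)) (f g : Fin m → Fin N),
      (applyV (S := S) (C * Z * d.map (algebraMap S (Module.End S W))) vac) f g
        = ∑ h', d h' g • ∑ h, (C f h) ((applyV (S := S) Z vac) h h') := by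
    intro Z f g
    show ((C * Z * d.map (algebraMap S (Module.End S W))) f g) vac = _
    rw [Matrix.mul_apply, LinearMap.sum_apply]
    apply Finset.sum_congr rfl
    intro h' _
    rw [Module.End.mul_apply, Matrix.map_apply, Module.algebraMap_end_apply, map_smul]
    congr 1
    rw [Matrix.mul_apply, LinearMap.sum_apply]
    apply Finset.sum_congr rfl
    intro hh _
    rw [Module.End.mul_apply]
    rfl
  ext f g
  rw [key X f g, key Y f g, h]

theorem applyV_CX {X Y : BigMat N m (Module.End S W)} {vac : W}
    (h : applyV (S := S) X vac = applyV (S := S) Y vac)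
    (C : BigMat N m (Module.End S W)) :
    applyV (S := S) (C * X) vac = applyV (S := S) (C * Y) vac := by
  have h1 : (1 : BigMat N m S).map (algebraMap S (Module.End S W)) = 1 :=
    Matrix.map_one _ (map_zero _) (map_one _)
  have h2 := applyV_CXd (S := S) h C 1
  rw [h1, mul_one, mul_one] at h2
  exact h2

end ApplyV

section ConjInv
variable {Mo : Type*} [Monoid Mo]

theorem conjInvRel {Q u v u' v' : Mo}
    (hu : u * u' = 1) (hu' : u' * u = 1) (hv : v * v' = 1) (hv' : v' * v = 1)
    (h : Q * u * v = v * u * Q) : Q * (v' * u') = u' * v' * Q := by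
  have h2 := congrArg (· * (v' * u')) h
  simp only [mul_assoc] at h2
  have e0 : Q * (u * (v * (v' * u'))) = Q := by
    rw [← mul_assoc v v' u', hv, one_mul, hu, mul_one]
  have e := e0 ▸ h2
  conv_rhs => rw [mul_assoc, e]
  rw [← mul_assoc v' v, hv', one_mul, ← mul_assoc u' u, hu', one_mul]

end ConjInv

section Fins
variable {k : ℕ}

theorem sAk_castSucc (i : Fin k) :
    (Fin.castSucc (Fin.last k) : Fin (k + 2)).succAbove i.castSucc = Fin.castSucc i.castSucc := by
  rw [Fin.succAbove_of_castSucc_lt]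
  · rw [Fin.lt_def]
    simp only [Fin.coe_castSucc, Fin.val_last]
    omega

theorem sAk_last :
    (Fin.castSucc (Fin.last k) : Fin (k + 2)).succAbove (Fin.last k) = Fin.last (k + 1) := by
  rw [Fin.succAbove_of_le_castSucc]
  · rfl
  · exact le_refl _

theorem cS_castSucc (i : Fin k) :
    Fin.castSucc (i.castSucc) = (Fin.castSucc i.castSucc : Fin (k + 2)) := rfl

theorem cS_last : Fin.castSucc (Fin.last k) = (Fin.castSucc (Fin.last k) : Fin (k + 2)) := rfl

end Fins

section Claims
variable {Mo : Type*} [Monoid Mo]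

theorem claim1 {k : ℕ} {Q : Mo} {U V : Fin k → Mo}
    (hcomm : ∀ i j, i ≠ j → Commute (U i) (V j))
    (hybe : ∀ i, Q * U i * V i = V i * U i * Q) :
    Q * (ascProd U * ascProd V) = ascProd V * ascProd U * Q := by
  rw [ascProd_mul_ascProd (fun i j hij => (hcomm j i (ne_of_gt hij)).symm),
    ascProd_mul_ascProd (fun i j hij => hcomm i j (ne_of_lt hij)),
    conj_ascProd (fun i => by rw [← mul_assoc, hybe i])]

theorem claim2 {k : ℕ} {Q : Mo} {U' V' : Fin k → Mo}
    (hcomm : ∀ i j, i ≠ j → Commute (U' i) (V' j))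
    (hconj : ∀ i, Q * (V' i * U' i) = U' i * V' i * Q) :
    Q * (descProd V' * descProd U') = descProd U' * descProd V' * Q := by
  rw [descProd_mul_descProd (fun i j hij => (hcomm j i (ne_of_gt hij)).symm),
    descProd_mul_descProd (fun i j hij => hcomm i j (ne_of_lt hij)),
    conj_descProd hconj]

end Claims

section MA
variable {N m : ℕ} (A : Type*) [Ring A] [Algebra S A]

def mA (X : BigMat N m S) : BigMat N m A := X.map (algebraMap S A)

theorem mA_mul (X Y : BigMat N m S) : mA (S := S) A (X * Y) = mA A X * mA A Y :=
  Matrix.map_mul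

theorem mA_one : mA (S := S) A (1 : BigMat N m S) = 1 :=
  Matrix.map_one _ (map_zero _) (map_one _)

theorem mA_asc {k : ℕ} (f : Fin k → BigMat N m S) :
    mA (S := S) A (ascProd f) = ascProd (fun i => mA A (f i)) :=
  map_ascProd _ (mA_one A) (mA_mul A) f

theorem mA_desc {k : ℕ} (f : Fin k → BigMat N m S) :
    mA (S := S) A (descProd f) = descProd (fun i => mA A (f i)) :=
  map_descProd _ (mA_one A) (mA_mul A) f

theorem mA_leg2 (a b : Fin m) (M : Mat2 N S) :
    mA (S := S) A (leg2 S a b M) = leg2 (S := S) A a b M :=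
  leg2_map M

end MA

section Aux
variable {N m : ℕ} {W : Type*} [AddCommGroup W] [Module S W]



theorem stmt10_aux
    (P Tm1 Tm2 : BigMat N m (Module.End S W))
    (QS A1 A2 B1 B2 : BigMat N m S) (vac : W)
    (hH1 : applyV (S := S) (Tm1 * P) vac
      = applyV (S := S) (mA (Module.End S W) A1 * P * mA (Module.End S W) B1) vac)
    (hH2 : applyV (S := S) (Tm2 * P) vac
      = applyV (S := S) (mA (Module.End S W) A2 * P * mA (Module.End S W) B2) vac)
    (hc1 : QS * (A2 * A1) = A1 * A2 * QS)
    (hc2 : QS * (B1 * B2) = B2 * B1 * QS)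
    (hQP : mA (Module.End S W) QS * P = P * mA (Module.End S W) QS)
    (hT1A2 : Tm1 * mA (Module.End S W) A2 = mA (Module.End S W) A2 * Tm1)
    (hT2A1 : Tm2 * mA (Module.End S W) A1 = mA (Module.End S W) A1 * Tm2) :
    applyV (S := S) (mA (Module.End S W) QS * Tm1 * Tm2 * P) vac
      = applyV (S := S) (Tm2 * Tm1 * mA (Module.End S W) QS * P) vac := by
  set q := mA (Module.End S W) QS with hq
  set a := mA (Module.End S W) A1 with ha
  set b := mA (Module.End S W) A2 with hb
  set c := mA (Module.End S W) B1 with hc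
  set d := mA (Module.End S W) B2 with hd
  have r1m : q * (b * a) = a * b * q := by
    have h := congrArg (mA (S := S) (Module.End S W)) hc1
    simp only [mA_mul] at h
    exact h
  have r2m : q * (c * d) = d * c * q := by
    have h := congrArg (mA (S := S) (Module.End S W)) hc2
    simp only [mA_mul] at h
    exact h
  have lhs_chain : applyV (S := S) (q * Tm1 * Tm2 * P) vac
      = applyV (S := S) (a * (b * P * d) * (c * q)) vac := by
    calc applyV (S := S) (q * Tm1 * Tm2 * P) vac
        = applyV (S := S) ((q * Tm1) * (Tm2 * P)) vac := by rw [mul_assoc]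
      _ = applyV (S := S) ((q * Tm1) * (b * P * d)) vac := applyV_CX hH2 _
      _ = applyV (S := S) ((q * b) * (Tm1 * P) * d) vac := by
          have e : (q * Tm1) * (b * P * d) = (q * b) * (Tm1 * P) * d := by
            calc (q * Tm1) * (b * P * d) = q * (Tm1 * b) * (P * d) := by
                  simp only [mul_assoc]
              _ = q * (b * Tm1) * (P * d) := by rw [hT1A2]
              _ = (q * b) * (Tm1 * P) * d := by simp only [mul_assoc]
          rw [e]
      _ = applyV (S := S) ((q * b) * (a * P * c) * d) vac := applyV_CXd hH1 _ B2
      _ = applyV (S := S) (a * (b * P * d) * (c * q)) vac := by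
          have e : (q * b) * (a * P * c) * d = a * (b * P * d) * (c * q) := by
            calc (q * b) * (a * P * c) * d
                = q * (b * a) * (P * (c * d)) := by simp only [mul_assoc]
              _ = (a * b * q) * (P * (c * d)) := by rw [r1m]
              _ = a * b * (q * P) * (c * d) := by simp only [mul_assoc]
              _ = a * b * (P * q) * (c * d) := by rw [hQP]
              _ = a * b * P * (q * (c * d)) := by simp only [mul_assoc]
              _ = a * b * P * (d * c * q) := by rw [r2m]
              _ = a * (b * P * d) * (c * q) := by simp only [mul_assoc]
          rw [e]
  have rhs_chain : applyV (S := S) (Tm2 * Tm1 * q * P) vac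
      = applyV (S := S) (a * (b * P * d) * (c * q)) vac := by
    calc applyV (S := S) (Tm2 * Tm1 * q * P) vac
        = applyV (S := S) (Tm2 * (Tm1 * P) * q) vac := by
          have e : Tm2 * Tm1 * q * P = Tm2 * (Tm1 * P) * q := by
            calc Tm2 * Tm1 * q * P = Tm2 * Tm1 * (q * P) := by simp only [mul_assoc]
              _ = Tm2 * Tm1 * (P * q) := by rw [hQP]
              _ = Tm2 * (Tm1 * P) * q := by simp only [mul_assoc]
          rw [e]
      _ = applyV (S := S) (Tm2 * (a * P * c) * q) vac := applyV_CXd hH1 Tm2 QS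
      _ = applyV (S := S) (a * (Tm2 * P) * (c * q)) vac := by
          have e : Tm2 * (a * P * c) * q = a * (Tm2 * P) * (c * q) := by
            calc Tm2 * (a * P * c) * q = (Tm2 * a) * (P * (c * q)) := by
                  simp only [mul_assoc]
              _ = (a * Tm2) * (P * (c * q)) := by rw [hT2A1]
              _ = a * (Tm2 * P) * (c * q) := by simp only [mul_assoc]
          rw [e]
      _ = applyV (S := S) (a * (b * P * d) * (c * q)) vac := by
          have h := applyV_CXd (S := S) hH2 a (B1 * QS)
          have e2 : (B1 * QS).map (algebraMap S (Module.End S W)) = c * q := by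
            rw [show ((B1 * QS).map (algebraMap S (Module.End S W)))
                = mA (Module.End S W) (B1 * QS) from rfl, mA_mul, ← hc, ← hq]
          rw [e2] at h
          exact h
  rw [lhs_chain, rhs_chain]

end Aux

section Fins2

def KK {k : ℕ} : Fin (k + 2) := Fin.castSucc (Fin.last k)
def KK1 {k : ℕ} : Fin (k + 2) := Fin.last (k + 1)
def LI {k : ℕ} (i : Fin k) : Fin (k + 2) := Fin.castSucc (Fin.castSucc i)

variable {k : ℕ}

theorem KK_ne_KK1 : (KK : Fin (k + 2)) ≠ KK1 := by
  simp [KK, KK1, Fin.ext_iff]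

theorem LI_ne_KK (i : Fin k) : LI i ≠ KK := by
  simp only [LI, KK, ne_eq, Fin.ext_iff, Fin.coe_castSucc, Fin.val_last]
  omega

theorem LI_ne_KK1 (i : Fin k) : LI i ≠ KK1 := by
  simp only [LI, KK1, ne_eq, Fin.ext_iff, Fin.coe_castSucc, Fin.val_last]
  omega

theorem LI_ne {i j : Fin k} (h : i ≠ j) : LI i ≠ LI j := by
  simp only [LI, ne_eq, Fin.ext_iff, Fin.coe_castSucc]
  exact fun hv => h (Fin.ext hv)

theorem KK_succAbove_castSucc (i : Fin k) :
    (KK (k := k)).succAbove i.castSucc = LI i := sAk_castSucc i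

theorem KK_succAbove_last : (KK (k := k)).succAbove (Fin.last k) = KK1 := sAk_last

theorem castSucc_castSucc' (i : Fin k) : Fin.castSucc i.castSucc = LI i := rfl

theorem castSucc_last' : Fin.castSucc (Fin.last k) = (KK (k := k)) := rfl

theorem vec3_injective {m : ℕ} {a b c : Fin m} (hab : a ≠ b) (hac : a ≠ c)
    (hbc : b ≠ c) : Function.Injective ![a, b, c] := by
  intro i j hij
  match i, j with
  | 0, 0 => rfl
  | 1, 1 => rfl
  | 2, 2 => rfl
  | 0, 1 => exact absurd hij hab
  | 0, 2 => exact absurd hij hac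
  | 1, 2 => exact absurd hij hbc
  | 1, 0 => exact absurd hij.symm hab
  | 2, 0 => exact absurd hij.symm hac
  | 2, 1 => exact absurd hij.symm hbc

end Fins2

section MoreTransport
variable {N m' m : ℕ} {A : Type*} [Ring A]

theorem pullMap_asc {k : ℕ} {ι : Fin m' → Fin m} (hι : Function.Injective ι)
    (f : Fin k → BigMat N m' A) :
    pullMap ι (ascProd f) = ascProd (fun i => pullMap ι (f i)) :=
  map_ascProd _ (pullMap_one hι) (pullMap_mul hι) f

theorem pullMap_desc {k : ℕ} {ι : Fin m' → Fin m} (hι : Function.Injective ι)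
    (f : Fin k → BigMat N m' A) :
    pullMap ι (descProd f) = descProd (fun i => pullMap ι (f i)) :=
  map_descProd _ (pullMap_one hι) (pullMap_mul hι) f

theorem ybe_transport (R : S → Mat2 N S)
    (hYBE : ∀ x y : S,
      leg2 (S := S) S (0 : Fin 3) 1 (R x) * leg2 S (0 : Fin 3) 2 (R (x + y)) *
          leg2 S (1 : Fin 3) 2 (R y) =
        leg2 S (1 : Fin 3) 2 (R y) * leg2 S (0 : Fin 3) 2 (R (x + y)) *
          leg2 S (0 : Fin 3) 1 (R x))
    (p q r : Fin m) (hpq : p ≠ q) (hpr : p ≠ r) (hqr : q ≠ r) (xx yy : S) :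
    leg2 (S := S) S p q (R yy) * leg2 S p r (R (yy + xx)) * leg2 S q r (R xx)
      = leg2 S q r (R xx) * leg2 S p r (R (yy + xx)) * leg2 S p q (R yy) := by
  have hinj : Function.Injective ![p, q, r] := vec3_injective hpq hpr hqr
  have h0 := congrArg (pullMap (N := N) ![p, q, r]) (hYBE yy xx)
  simp only [pullMap_mul hinj, pullMap_leg2 hinj] at h0
  simpa using h0

end MoreTransport


/-- suppose `R̂` satisfies the Yang–Baxter equation
`R̂₁₂(x) R̂₁₃(x+y) R̂₂₃(y) = R̂₂₃(y) R̂₁₃(x+y) R̂₁₂(x)` (and is invertible, with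
inverse `Rinv`), and `T⁻(u)` is an operator series on `W` satisfying, on the
span of the vectors `T⁺₁(v₁) ⋯ T⁺ₖ(vₖ) 𝟙`,
`T⁻_{k+1}(u) T⁺₁(v₁)⋯T⁺ₖ(vₖ) = R̂_{1,k+1}(-u+v₁-hc/2) ⋯ R̂_{k,k+1}(-u+vₖ-hc/2)
T⁺₁(v₁)⋯T⁺ₖ(vₖ) R̂_{k,k+1}(-u+vₖ+hc/2)⁻¹ ⋯ R̂_{1,k+1}(-u+v₁+hc/2)⁻¹`.
Then `R̂(u₁-u₂) T⁻₁(u₁) T⁻₂(u₂) = T⁻₂(u₂) T⁻₁(u₁) R̂(u₁-u₂)` as operators on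
that span. -/
theorem stmt10 (N : ℕ) (W : Type*) [AddCommGroup W] [Module S W]
    (R Rinv : S → Mat2 N S)
    (hR : ∀ w : S, R w * Rinv w = 1 ∧ Rinv w * R w = 1)
    (hYBE : ∀ x y : S,
      leg2 (S := S) S (0 : Fin 3) 1 (R x) * leg2 S (0 : Fin 3) 2 (R (x + y)) *
          leg2 S (1 : Fin 3) 2 (R y) =
        leg2 S (1 : Fin 3) 2 (R y) * leg2 S (0 : Fin 3) 2 (R (x + y)) *
          leg2 S (0 : Fin 3) 1 (R x))
    (Tp Tm : S → Matrix (Fin N) (Fin N) (Module.End S W))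
    (vac : W) (c2 : S)
    (hTm : ∀ (k : ℕ) (u : S) (v : Fin k → S),
      applyV (S := S)
        (leg1 (Fin.last k) (Tm u) *
          ascProd (fun i : Fin k => leg1 i.castSucc (Tp (v i)))) vac =
      applyV (S := S)
        (ascProd (fun i : Fin k =>
            leg2 (Module.End S W) i.castSucc (Fin.last k) (R (-u + v i - c2))) *
          ascProd (fun i : Fin k => leg1 i.castSucc (Tp (v i))) *
          descProd (fun i : Fin k =>
            leg2 (Module.End S W) i.castSucc (Fin.last k) (Rinv (-u + v i + c2)))) vac) :
    ∀ (k : ℕ) (u₁ u₂ : S) (v : Fin k → S),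
      applyV (S := S)
        (leg2 (Module.End S W) (⟨k, by omega⟩ : Fin (k + 2)) ⟨k + 1, by omega⟩ (R (u₁ - u₂)) *
          leg1 (⟨k, by omega⟩ : Fin (k + 2)) (Tm u₁) *
          leg1 (⟨k + 1, by omega⟩ : Fin (k + 2)) (Tm u₂) *
          ascProd (fun i : Fin k => leg1 (⟨i.1, by omega⟩ : Fin (k + 2)) (Tp (v i)))) vac =
      applyV (S := S)
        (leg1 (⟨k + 1, by omega⟩ : Fin (k + 2)) (Tm u₂) *
          leg1 (⟨k, by omega⟩ : Fin (k + 2)) (Tm u₁) *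
          leg2 (Module.End S W) (⟨k, by omega⟩ : Fin (k + 2)) ⟨k + 1, by omega⟩ (R (u₁ - u₂)) *
          ascProd (fun i : Fin k => leg1 (⟨i.1, by omega⟩ : Fin (k + 2)) (Tp (v i)))) vac := by
  intro k u₁ u₂ v
  show applyV (S := S)
      (leg2 (Module.End S W) (KK (k := k)) KK1 (R (u₁ - u₂)) *
        leg1 (KK (k := k)) (Tm u₁) * leg1 (KK1 (k := k)) (Tm u₂) *
        ascProd (fun i : Fin k => leg1 (LI i) (Tp (v i)))) vac =
    applyV (S := S)
      (leg1 (KK1 (k := k)) (Tm u₂) * leg1 (KK (k := k)) (Tm u₁) *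
        leg2 (Module.End S W) (KK (k := k)) KK1 (R (u₁ - u₂)) *
        ascProd (fun i : Fin k => leg1 (LI i) (Tp (v i)))) vac
  -- injectivity of the two leg insertions
  have hσ2 : Function.Injective (KK (k := k)).succAbove := Fin.succAbove_right_injective
  have hσ1 : Function.Injective (Fin.castSucc : Fin (k + 1) → Fin (k + 2)) :=
    Fin.castSucc_injective _
  -- transported hTm for Tm u₂ (idle leg k)
  have H2 := applyV_pullMap_congr (S := S) ((KK (k := k)).succAbove) (hTm k u₂ v)
  simp only [pullMap_mul hσ2, pullMap_asc hσ2, pullMap_desc hσ2, pullMap_leg1 hσ2,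
    pullMap_leg2 hσ2, KK_succAbove_castSucc, KK_succAbove_last] at H2
  -- transported hTm for Tm u₁ (idle leg k+1)
  have H1 := applyV_pullMap_congr (S := S) (Fin.castSucc : Fin (k + 1) → Fin (k + 2))
    (hTm k u₁ v)
  simp only [pullMap_mul hσ1, pullMap_asc hσ1, pullMap_desc hσ1, pullMap_leg1 hσ1,
    pullMap_leg2 hσ1, castSucc_castSucc', castSucc_last'] at H1
  -- convert the End-valued scalar matrices into mapped S-valued ones
  have hA2e : ascProd (fun i : Fin k => leg2 (Module.End S W) (LI i) KK1 (R (-u₂ + v i - c2)))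
      = mA (Module.End S W)
          (ascProd (fun i : Fin k => leg2 S (LI i) KK1 (R (-u₂ + v i - c2)))) := by
    rw [mA_asc]
    simp only [mA_leg2]
  have hB2e : descProd (fun i : Fin k =>
        leg2 (Module.End S W) (LI i) KK1 (Rinv (-u₂ + v i + c2)))
      = mA (Module.End S W)
          (descProd (fun i : Fin k => leg2 S (LI i) KK1 (Rinv (-u₂ + v i + c2)))) := by
    rw [mA_desc]
    simp only [mA_leg2]
  have hA1e : ascProd (fun i : Fin k => leg2 (Module.End S W) (LI i) KK (R (-u₁ + v i - c2)))
      = mA (Module.End S W)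
          (ascProd (fun i : Fin k => leg2 S (LI i) KK (R (-u₁ + v i - c2)))) := by
    rw [mA_asc]
    simp only [mA_leg2]
  have hB1e : descProd (fun i : Fin k =>
        leg2 (Module.End S W) (LI i) KK (Rinv (-u₁ + v i + c2)))
      = mA (Module.End S W)
          (descProd (fun i : Fin k => leg2 S (LI i) KK (Rinv (-u₁ + v i + c2)))) := by
    rw [mA_desc]
    simp only [mA_leg2]
  rw [hA2e, hB2e] at H2
  rw [hA1e, hB1e] at H1
  -- transported Yang–Baxter relation on legs (i, k, k+1)
  have hYBE' : ∀ (i : Fin k) (xx yy : S),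
      leg2 (S := S) S (LI i) (KK (k := k)) (R yy) * leg2 S (LI i) KK1 (R (yy + xx)) *
          leg2 S (KK (k := k)) KK1 (R xx)
        = leg2 S (KK (k := k)) KK1 (R xx) * leg2 S (LI i) KK1 (R (yy + xx)) *
          leg2 S (LI i) (KK (k := k)) (R yy) :=
    fun i xx yy => ybe_transport R hYBE (LI i) KK KK1 (LI_ne_KK i) (LI_ne_KK1 i)
      KK_ne_KK1 xx yy
  -- claim 1
  have hc1 : leg2 S (KK (k := k)) KK1 (R (u₁ - u₂)) *
        (ascProd (fun i : Fin k => leg2 S (LI i) KK1 (R (-u₂ + v i - c2))) *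
          ascProd (fun i : Fin k => leg2 S (LI i) KK (R (-u₁ + v i - c2))))
      = ascProd (fun i : Fin k => leg2 S (LI i) KK (R (-u₁ + v i - c2))) *
          ascProd (fun i : Fin k => leg2 S (LI i) KK1 (R (-u₂ + v i - c2))) *
          leg2 S (KK (k := k)) KK1 (R (u₁ - u₂)) := by
    apply claim1
    · intro i j hij
      exact leg2_comm_leg2 (LI_ne_KK1 i) (LI_ne hij.symm) (LI_ne_KK1 j)
        (LI_ne_KK i).symm KK_ne_KK1 _ _
    · intro i
      have harg : (-u₁ + v i - c2) + (u₁ - u₂) = -u₂ + v i - c2 := by ring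
      have h := hYBE' i (u₁ - u₂) (-u₁ + v i - c2)
      rw [harg] at h
      exact h.symm
  -- claim 2
  have hc2 : leg2 S (KK (k := k)) KK1 (R (u₁ - u₂)) *
        (descProd (fun i : Fin k => leg2 S (LI i) KK (Rinv (-u₁ + v i + c2))) *
          descProd (fun i : Fin k => leg2 S (LI i) KK1 (Rinv (-u₂ + v i + c2))))
      = descProd (fun i : Fin k => leg2 S (LI i) KK1 (Rinv (-u₂ + v i + c2))) *
          descProd (fun i : Fin k => leg2 S (LI i) KK (Rinv (-u₁ + v i + c2))) *
          leg2 S (KK (k := k)) KK1 (R (u₁ - u₂)) := by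
    apply claim2
    · intro i j hij
      exact leg2_comm_leg2 (LI_ne_KK1 i) (LI_ne hij.symm) (LI_ne_KK1 j)
        (LI_ne_KK i).symm KK_ne_KK1 _ _
    · intro i
      have harg : (-u₁ + v i + c2) + (u₁ - u₂) = -u₂ + v i + c2 := by ring
      have h := hYBE' i (u₁ - u₂) (-u₁ + v i + c2)
      rw [harg] at h
      exact conjInvRel
        (by rw [leg2_mul (LI_ne_KK1 i), (hR _).1, leg2_one (LI_ne_KK1 i)])
        (by rw [leg2_mul (LI_ne_KK1 i), (hR _).2, leg2_one (LI_ne_KK1 i)])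
        (by rw [leg2_mul (LI_ne_KK i), (hR _).1, leg2_one (LI_ne_KK i)])
        (by rw [leg2_mul (LI_ne_KK i), (hR _).2, leg2_one (LI_ne_KK i)])
        h.symm
  -- commutation of the R-matrix factors with the T-factors
  have hQP : mA (Module.End S W) (leg2 S (KK (k := k)) KK1 (R (u₁ - u₂))) *
        ascProd (fun i : Fin k => leg1 (LI i) (Tp (v i)))
      = ascProd (fun i : Fin k => leg1 (LI i) (Tp (v i))) *
        mA (Module.End S W) (leg2 S (KK (k := k)) KK1 (R (u₁ - u₂))) := by
    rw [mA_leg2]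
    exact (commute_ascProd (fun i =>
      (leg2_comm_leg1 KK_ne_KK1 (LI_ne_KK i) (LI_ne_KK1 i) (R (u₁ - u₂)) (Tp (v i)) :
        Commute (leg2 (Module.End S W) (KK (k := k)) KK1 (R (u₁ - u₂)))
          (leg1 (LI i) (Tp (v i)))))).eq
  have hT1A2 : leg1 (KK (k := k)) (Tm u₁) *
        mA (Module.End S W)
          (ascProd (fun i : Fin k => leg2 S (LI i) KK1 (R (-u₂ + v i - c2))))
      = mA (Module.End S W)
          (ascProd (fun i : Fin k => leg2 S (LI i) KK1 (R (-u₂ + v i - c2)))) *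
        leg1 (KK (k := k)) (Tm u₁) := by
    rw [mA_asc]
    simp only [mA_leg2]
    exact ((commute_ascProd (fun i =>
      ((leg2_comm_leg1 (LI_ne_KK1 i) (LI_ne_KK i).symm KK_ne_KK1 _ _).symm :
        Commute (leg1 (KK (k := k)) (Tm u₁))
          (leg2 (Module.End S W) (LI i) KK1 (R (-u₂ + v i - c2))))))).eq
  have hT2A1 : leg1 (KK1 (k := k)) (Tm u₂) *
        mA (Module.End S W)
          (ascProd (fun i : Fin k => leg2 S (LI i) KK (R (-u₁ + v i - c2))))
      = mA (Module.End S W)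
          (ascProd (fun i : Fin k => leg2 S (LI i) KK (R (-u₁ + v i - c2)))) *
        leg1 (KK1 (k := k)) (Tm u₂) := by
    rw [mA_asc]
    simp only [mA_leg2]
    exact ((commute_ascProd (fun i =>
      ((leg2_comm_leg1 (LI_ne_KK i) (LI_ne_KK1 i).symm KK_ne_KK1.symm _ _).symm :
        Commute (leg1 (KK1 (k := k)) (Tm u₂))
          (leg2 (Module.End S W) (LI i) KK (R (-u₁ + v i - c2))))))).eq
  rw [← mA_leg2 (Module.End S W) (KK (k := k)) KK1 (R (u₁ - u₂))]
  exact stmt10_aux _ _ _ _ _ _ _ _ vac H1 H2 hc1 hc2 hQP hT1A2 hT2A1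

end
end
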